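/- Let (u_0, λ_0) and (u_1, λ_1) be the first and second eigenpairs of -u'' + V u = λ u on (-1,1) with Robin boundary conditions u'(±1) = ∓α u(±1), where λ_0 < λ_1, u_0 > 0 on (-1,1), and u_1 has exactly one interior zero and is positive near x = -1. Then the ratio u_1/u_0 is strictly monotonically decreasing on [-1,1]. -/

import Mathlib

open Set

lemma ode_zero_fwd (g p q : ℝ → ℝ) (a b : ℝ)
    (hgc : ContinuousOn g (Icc a b))
    (hp : ∀ x ∈ Icc a b, HasDerivWithinAt p (q x) (Icc a b) x)
    (hq : ∀ x ∈ Icc a b, HasDerivWithinAt q (g x * p x) (Icc a b) x)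
    (hpa : p a = 0) (hqa : q a = 0) : ∀ x ∈ Icc a b, p x = 0 := by
  obtain ⟨C, hC⟩ := isCompact_Icc.exists_bound_of_continuousOn hgc
  set K : ℝ := max C 1 with hK
  have hK1 : (1:ℝ) ≤ K := le_max_right _ _
  set f : ℝ → ℝ × ℝ := fun x => (p x, q x) with hf
  have hpc : ContinuousOn p (Icc a b) := fun x hx => (hp x hx).continuousWithinAt
  have hqc : ContinuousOn q (Icc a b) := fun x hx => (hq x hx).continuousWithinAt
  have hfc : ContinuousOn f (Icc a b) := hpc.prodMk hqc
  have hfd : ∀ x ∈ Ico a b, HasDerivWithinAt f (q x, g x * p x) (Ici x) x := by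
    intro x hx
    have hmem : Icc a b ∈ nhdsWithin x (Ici x) := by
      have h1 : Ici x ∩ Iio b ∈ nhdsWithin x (Ici x) :=
        inter_mem_nhdsWithin _ (Iio_mem_nhds hx.2)
      exact Filter.mem_of_superset h1 (fun y hy => ⟨hx.1.trans hy.1, hy.2.le⟩)
    have hx' : x ∈ Icc a b := ⟨hx.1, hx.2.le⟩
    exact (((hp x hx').prodMk (hq x hx')).mono_of_mem_nhdsWithin hmem)
  have bound : ∀ x ∈ Ico a b, ‖(q x, g x * p x)‖ ≤ K * ‖f x‖ + 0 := by
    intro x hx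
    have hx' : x ∈ Icc a b := ⟨hx.1, hx.2.le⟩
    rw [add_zero]
    have hnf : ‖f x‖ = max ‖p x‖ ‖q x‖ := rfl
    rw [Prod.norm_def, hnf]
    have h0 : (0:ℝ) ≤ max ‖p x‖ ‖q x‖ := le_trans (norm_nonneg _) (le_max_left _ _)
    apply max_le
    · calc ‖q x‖ ≤ max ‖p x‖ ‖q x‖ := le_max_right _ _
        _ ≤ K * max ‖p x‖ ‖q x‖ := le_mul_of_one_le_left h0 hK1
    · calc ‖g x * p x‖ = ‖g x‖ * ‖p x‖ := norm_mul _ _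
        _ ≤ K * max ‖p x‖ ‖q x‖ := by
            apply mul_le_mul ((hC x hx').trans (le_max_left _ _)) (le_max_left _ _)
              (norm_nonneg _) (le_trans zero_le_one hK1)
  have hfa : ‖f a‖ ≤ 0 := by
    simp [hf, hpa, hqa, Prod.norm_def]
  have key := norm_le_gronwallBound_of_norm_deriv_right_le hfc hfd hfa bound
  intro x hx
  have h1 := key x hx
  rw [gronwallBound_ε0, zero_mul] at h1
  have hple : ‖p x‖ ≤ ‖f x‖ := le_max_left _ _
  have h2 : ‖p x‖ ≤ 0 := hple.trans h1
  exact norm_eq_zero.mp (le_antisymm h2 (norm_nonneg _))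

lemma ode_zero_bwd (g p q : ℝ → ℝ) (a b : ℝ)
    (hgc : ContinuousOn g (Icc a b))
    (hp : ∀ x ∈ Icc a b, HasDerivWithinAt p (q x) (Icc a b) x)
    (hq : ∀ x ∈ Icc a b, HasDerivWithinAt q (g x * p x) (Icc a b) x)
    (hpb : p b = 0) (hqb : q b = 0) : ∀ x ∈ Icc a b, p x = 0 := by
  set σ : ℝ → ℝ := fun x => a + b - x with hσ
  have hmaps : MapsTo σ (Icc a b) (Icc a b) := by
    intro y hy
    exact ⟨by simp only [hσ]; linarith [hy.2], by simp only [hσ]; linarith [hy.1]⟩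
  have hσd : ∀ x, HasDerivWithinAt σ (-1) (Icc a b) x := by
    intro x
    simpa using ((hasDerivWithinAt_id x (Icc a b)).const_sub (a + b))
  have hres := ode_zero_fwd (fun x => g (σ x)) (fun x => p (σ x)) (fun x => -q (σ x)) a b
    (hgc.comp (continuous_const.sub continuous_id).continuousOn hmaps)
    (by
      intro x hx
      have h1 := (hp (σ x) (hmaps hx)).comp x (hσd x) hmaps
      have : q (σ x) * (-1) = -q (σ x) := by ring
      rw [this] at h1; exact h1)
    (by
      intro x hx
      have h1 := (hq (σ x) (hmaps hx)).comp x (hσd x) hmaps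
      have h2 : HasDerivWithinAt (fun y => -q (σ y)) (-(g (σ x) * p (σ x) * (-1))) (Icc a b) x :=
        h1.neg
      have : -(g (σ x) * p (σ x) * (-1)) = g (σ x) * p (σ x) := by ring
      rwa [this] at h2)
    (by show p (a + b - a) = 0; rw [add_sub_cancel_left]; exact hpb)
    (by show -q (a + b - a) = 0; rw [add_sub_cancel_left, hqb, neg_zero])
  intro x hx
  have hx' : σ x ∈ Icc a b := hmaps hx
  have h3 : p (a + b - (a + b - x)) = 0 := hres (σ x) hx'
  have hxx : a + b - (a + b - x) = x := by ring
  rwa [hxx] at h3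

theorem ratio_monotone
    (V : ℝ → ℝ) (hV : ContinuousOn V (Icc (-1:ℝ) 1))
    (α lam0 lam1 : ℝ) (hlam : lam0 < lam1)
    (u0 u0' u0'' u1 u1' u1'' : ℝ → ℝ)
    (hu0d1 : ∀ x ∈ Icc (-1:ℝ) 1, HasDerivWithinAt u0 (u0' x) (Icc (-1:ℝ) 1) x)
    (hu0d2 : ∀ x ∈ Icc (-1:ℝ) 1, HasDerivWithinAt u0' (u0'' x) (Icc (-1:ℝ) 1) x)
    (hu1d1 : ∀ x ∈ Icc (-1:ℝ) 1, HasDerivWithinAt u1 (u1' x) (Icc (-1:ℝ) 1) x)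
    (hu1d2 : ∀ x ∈ Icc (-1:ℝ) 1, HasDerivWithinAt u1' (u1'' x) (Icc (-1:ℝ) 1) x)
    (heq0 : ∀ x ∈ Icc (-1:ℝ) 1, -u0'' x + V x * u0 x = lam0 * u0 x)
    (heq1 : ∀ x ∈ Icc (-1:ℝ) 1, -u1'' x + V x * u1 x = lam1 * u1 x)
    (hbc0R : u0' 1 = -α * u0 1) (hbc0L : u0' (-1) = α * u0 (-1))
    (hbc1R : u1' 1 = -α * u1 1) (hbc1L : u1' (-1) = α * u1 (-1))
    (hu0pos : ∀ x ∈ Ioo (-1:ℝ) 1, 0 < u0 x)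
    -- u1 has exactly one interior zero and is positive near -1
    (x0 : ℝ) (hx0 : x0 ∈ Ioo (-1:ℝ) 1) (hx0z : u1 x0 = 0)
    (huniq : ∀ x ∈ Ioo (-1:ℝ) 1, u1 x = 0 → x = x0)
    (hnear : ∃ ε > 0, ∀ x ∈ Ioo (-1:ℝ) (-1 + ε), 0 < u1 x) :
    StrictAntiOn (fun x => u1 x / u0 x) (Icc (-1:ℝ) 1) := by
  obtain ⟨ε, hε, hnear⟩ := hnear
  have hx0I : x0 ∈ Icc (-1:ℝ) 1 := Ioo_subset_Icc_self hx0
  -- rewritten second-derivative hypotheses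
  have hu0d2' : ∀ x ∈ Icc (-1:ℝ) 1, HasDerivWithinAt u0' ((V x - lam0) * u0 x) (Icc (-1:ℝ) 1) x := by
    intro x hx
    have he : u0'' x = (V x - lam0) * u0 x := by have := heq0 x hx; ring_nf; ring_nf at this ⊢; linarith
    rw [← he]; exact hu0d2 x hx
  have hu1d2' : ∀ x ∈ Icc (-1:ℝ) 1, HasDerivWithinAt u1' ((V x - lam1) * u1 x) (Icc (-1:ℝ) 1) x := by
    intro x hx
    have he : u1'' x = (V x - lam1) * u1 x := by have := heq1 x hx; ring_nf; ring_nf at this ⊢; linarith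
    rw [← he]; exact hu1d2 x hx
  have hg0c : ContinuousOn (fun x => V x - lam0) (Icc (-1:ℝ) 1) := hV.sub continuousOn_const
  have hg1c : ContinuousOn (fun x => V x - lam1) (Icc (-1:ℝ) 1) := hV.sub continuousOn_const
  have hu0c : ContinuousOn u0 (Icc (-1:ℝ) 1) := fun x hx => (hu0d1 x hx).continuousWithinAt
  have hu1c : ContinuousOn u1 (Icc (-1:ℝ) 1) := fun x hx => (hu1d1 x hx).continuousWithinAt
  -- u0 is positive at the endpoints as well
  have hclosL : Filter.NeBot (nhdsWithin (-1:ℝ) (Ioo (-1:ℝ) 1)) := by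
    rw [← mem_closure_iff_nhdsWithin_neBot, closure_Ioo (by norm_num : (-1:ℝ) ≠ 1)]
    exact ⟨le_refl _, by norm_num⟩
  have hclosR : Filter.NeBot (nhdsWithin (1:ℝ) (Ioo (-1:ℝ) 1)) := by
    rw [← mem_closure_iff_nhdsWithin_neBot, closure_Ioo (by norm_num : (-1:ℝ) ≠ 1)]
    exact ⟨by norm_num, le_refl _⟩
  have hend : ∀ y ∈ Icc (-1:ℝ) 1, 0 ≤ u0 y := by
    intro y hy
    rcases lt_or_ge y 1 with h1 | h1
    · rcases hy.1.eq_or_lt with h2 | h2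
      · -- y = -1
        haveI := hclosL
        have ht : Filter.Tendsto u0 (nhdsWithin (-1:ℝ) (Ioo (-1:ℝ) 1)) (nhds (u0 (-1))) :=
          ((hu0c (-1) ⟨le_refl _, by norm_num⟩).mono Ioo_subset_Icc_self)
        have hge := ge_of_tendsto ht (Filter.eventually_of_mem self_mem_nhdsWithin
          (fun z hz => (hu0pos z hz).le))
        rw [← h2]; exact hge
      · exact (hu0pos y ⟨h2, h1⟩).le
    · have h2 : y = 1 := le_antisymm hy.2 h1
      haveI := hclosR
      have ht : Filter.Tendsto u0 (nhdsWithin (1:ℝ) (Ioo (-1:ℝ) 1)) (nhds (u0 1)) :=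
        ((hu0c 1 ⟨by norm_num, le_refl _⟩).mono Ioo_subset_Icc_self)
      have := ge_of_tendsto ht (Filter.eventually_of_mem self_mem_nhdsWithin
        (fun z hz => (hu0pos z hz).le))
      rw [h2]; exact this
  have hu0L : 0 < u0 (-1) := by
    rcases (hend (-1) ⟨le_refl _, by norm_num⟩).lt_or_eq with h | h
    · exact h
    · exfalso
      have h0' : u0' (-1) = 0 := by rw [hbc0L, ← h, mul_zero]
      have hz := ode_zero_fwd (fun x => V x - lam0) u0 u0' (-1) 1 hg0c hu0d1 hu0d2' h.symm h0'
      have := hz 0 (by norm_num)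
      have := hu0pos 0 (by norm_num)
      linarith
  have hu0R : 0 < u0 1 := by
    rcases (hend 1 ⟨by norm_num, le_refl _⟩).lt_or_eq with h | h
    · exact h
    · exfalso
      have h0' : u0' 1 = 0 := by rw [hbc0R, ← h, mul_zero]
      have hz := ode_zero_bwd (fun x => V x - lam0) u0 u0' (-1) 1 hg0c hu0d1 hu0d2' h.symm h0'
      have := hz 0 (by norm_num)
      have := hu0pos 0 (by norm_num)
      linarith
  have hu0posI : ∀ x ∈ Icc (-1:ℝ) 1, 0 < u0 x := by
    intro x hx
    rcases hx.1.eq_or_lt with h | h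
    · rwa [← h]
    rcases hx.2.eq_or_lt with h2 | h2
    · rwa [h2]
    exact hu0pos x ⟨h, h2⟩
  -- u1 positive on (-1, x0)
  have hu1posL : ∀ x ∈ Ioo (-1:ℝ) x0, 0 < u1 x := by
    intro x hx
    have hxI : x ∈ Ioo (-1:ℝ) 1 := ⟨hx.1, hx.2.trans hx0.2⟩
    have hne : u1 x ≠ 0 := fun h => absurd (huniq x hxI h) (ne_of_lt hx.2)
    rcases hne.lt_or_gt with hneg | hpos
    · exfalso
      set δ := min ε (x + 1) with hδ
      have hδpos : 0 < δ := lt_min hε (by linarith [hx.1])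
      set y := -1 + δ / 2 with hy
      have hy1 : (-1:ℝ) < y := by simp only [hy]; linarith
      have hyε : y < -1 + ε := by
        have : δ ≤ ε := min_le_left _ _
        simp only [hy]; linarith
      have hyx : y < x := by
        have : δ ≤ x + 1 := min_le_right _ _
        simp only [hy]; linarith
      have hu1y : 0 < u1 y := hnear y ⟨hy1, hyε⟩
      have hsub : Icc y x ⊆ Icc (-1:ℝ) 1 := Icc_subset_Icc hy1.le hxI.2.le
      have hivt := intermediate_value_Ioo' hyx.le (hu1c.mono hsub)
      have h0mem : (0:ℝ) ∈ Ioo (u1 x) (u1 y) := ⟨hneg, hu1y⟩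
      obtain ⟨z, hz, hz0⟩ := hivt h0mem
      have hzI : z ∈ Ioo (-1:ℝ) 1 := ⟨hy1.trans hz.1, hz.2.trans hxI.2⟩
      have := huniq z hzI hz0
      have : z < x0 := (hz.2.trans hx.2)
      linarith [huniq z hzI hz0]
    · exact hpos
  -- derivative of u1 at x0 is an honest derivative
  have hder : HasDerivAt u1 (u1' x0) x0 :=
    (hu1d1 x0 hx0I).hasDerivAt (Icc_mem_nhds hx0.1 hx0.2)
  -- u1' x0 ≠ 0
  have hu1'ne : u1' x0 ≠ 0 := by
    intro h
    have hsub : Icc (-1:ℝ) x0 ⊆ Icc (-1:ℝ) 1 := Icc_subset_Icc le_rfl hx0.2.le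
    have hz := ode_zero_bwd (fun x => V x - lam1) u1 u1' (-1) x0 (hg1c.mono hsub)
      (fun x hx => (hu1d1 x (hsub hx)).mono hsub)
      (fun x hx => (hu1d2' x (hsub hx)).mono hsub) hx0z h
    set δ := min ε (x0 + 1) with hδ
    have hδpos : 0 < δ := lt_min hε (by linarith [hx0.1])
    set y := -1 + δ / 2 with hy
    have hy1 : (-1:ℝ) < y := by simp only [hy]; linarith
    have hyε : y < -1 + ε := by
      have : δ ≤ ε := min_le_left _ _
      simp only [hy]; linarith
    have hyx : y < x0 := by
      have : δ ≤ x0 + 1 := min_le_right _ _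
      simp only [hy]; linarith
    have h1 := hnear y ⟨hy1, hyε⟩
    have h2 := hz y ⟨hy1.le, hyx.le⟩
    linarith
  have hslope : Filter.Tendsto (slope u1 x0) (nhdsWithin x0 {x0}ᶜ) (nhds (u1' x0)) :=
    hasDerivAt_iff_tendsto_slope.mp hder
  -- u1' x0 < 0
  have hu1'neg : u1' x0 < 0 := by
    rcases hu1'ne.lt_or_gt with h | h
    · exact h
    exfalso
    have hT : Filter.Tendsto (slope u1 x0) (nhdsWithin x0 (Iio x0)) (nhds (u1' x0)) :=
      hslope.mono_left (nhdsWithin_mono x0 (fun y hy => ne_of_lt hy))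
    have he1 : ∀ᶠ y in nhdsWithin x0 (Iio x0), 0 < slope u1 x0 y :=
      hT.eventually (eventually_gt_nhds h)
    have he2 : Ioo (-1:ℝ) x0 ∈ nhdsWithin x0 (Iio x0) :=
      Ioo_mem_nhdsLT_of_mem ⟨hx0.1, le_rfl⟩
    obtain ⟨y, hy1, hy2⟩ := (he1.and (Filter.eventually_of_mem he2 (fun y hy => hy))).exists
    have hyx : y - x0 < 0 := sub_neg.mpr hy2.2
    have hval : slope u1 x0 y = u1 y / (y - x0) := by
      rw [slope_def_field, hx0z, sub_zero]
    have hu1y : u1 y < 0 := by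
      have h3 := mul_neg_of_pos_of_neg (hval ▸ hy1) hyx
      rwa [div_mul_cancel₀ _ (ne_of_lt hyx)] at h3
    exact absurd (hu1posL y hy2) (not_lt.mpr hu1y.le)
  -- u1 negative on (x0, 1)
  have hu1negR : ∀ x ∈ Ioo x0 (1:ℝ), u1 x < 0 := by
    intro x hx
    have hxI : x ∈ Ioo (-1:ℝ) 1 := ⟨hx0.1.trans hx.1, hx.2⟩
    have hne : u1 x ≠ 0 := fun h => absurd (huniq x hxI h) (ne_of_gt hx.1)
    rcases hne.lt_or_gt with hneg | hpos
    · exact hneg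
    exfalso
    have hT : Filter.Tendsto (slope u1 x0) (nhdsWithin x0 (Ioi x0)) (nhds (u1' x0)) :=
      hslope.mono_left (nhdsWithin_mono x0 (fun y hy => ne_of_gt hy))
    have he1 : ∀ᶠ y in nhdsWithin x0 (Ioi x0), slope u1 x0 y < 0 :=
      hT.eventually (eventually_lt_nhds hu1'neg)
    have he2 : Ioo x0 x ∈ nhdsWithin x0 (Ioi x0) :=
      Ioo_mem_nhdsGT_of_mem ⟨le_rfl, hx.1⟩
    obtain ⟨y, hy1, hy2⟩ := (he1.and (Filter.eventually_of_mem he2 (fun y hy => hy))).exists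
    have hyx : 0 < y - x0 := sub_pos.mpr hy2.1
    have hval : slope u1 x0 y = u1 y / (y - x0) := by
      rw [slope_def_field, hx0z, sub_zero]
    have hu1y : u1 y < 0 := by
      have h3 := mul_neg_of_neg_of_pos (hval ▸ hy1) hyx
      rwa [div_mul_cancel₀ _ (ne_of_gt hyx)] at h3
    -- IVT between y and x gives another zero
    have hsub : Icc y x ⊆ Icc (-1:ℝ) 1 :=
      Icc_subset_Icc (hx0.1.trans hy2.1).le hxI.2.le
    have hivt := intermediate_value_Ioo hy2.2.le (hu1c.mono hsub)
    obtain ⟨z, hz, hz0⟩ := hivt (⟨hu1y, hpos⟩ : (0:ℝ) ∈ Ioo (u1 y) (u1 x))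
    have hzI : z ∈ Ioo (-1:ℝ) 1 := ⟨hx0.1.trans (hy2.1.trans hz.1), hz.2.trans hxI.2⟩
    have := huniq z hzI hz0
    have : x0 < z := hy2.1.trans hz.1
    linarith [huniq z hzI hz0]
  -- the Wronskian
  set W : ℝ → ℝ := fun x => u1' x * u0 x - u1 x * u0' x with hW
  have hWd : ∀ x ∈ Icc (-1:ℝ) 1,
      HasDerivWithinAt W ((lam0 - lam1) * (u0 x * u1 x)) (Icc (-1:ℝ) 1) x := by
    intro x hx
    have h1 := ((hu1d2' x hx).mul (hu0d1 x hx)).sub ((hu1d1 x hx).mul (hu0d2' x hx))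
    exact h1.congr_deriv (by ring)
  have hWc : ContinuousOn W (Icc (-1:ℝ) 1) := fun x hx => (hWd x hx).continuousWithinAt
  have hWL : W (-1) = 0 := by simp only [hW, hbc1L, hbc0L]; ring
  have hWR : W 1 = 0 := by simp only [hW, hbc1R, hbc0R]; ring
  -- W is strictly decreasing on [-1, x0]
  have hWanti : StrictAntiOn W (Icc (-1:ℝ) x0) := by
    apply strictAntiOn_of_deriv_neg (convex_Icc _ _)
      (hWc.mono (Icc_subset_Icc le_rfl hx0.2.le))
    intro x hx
    rw [interior_Icc] at hx
    have hxI : x ∈ Ioo (-1:ℝ) 1 := ⟨hx.1, hx.2.trans hx0.2⟩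
    have hD : HasDerivAt W ((lam0 - lam1) * (u0 x * u1 x)) x :=
      (hWd x (Ioo_subset_Icc_self hxI)).hasDerivAt (Icc_mem_nhds hxI.1 hxI.2)
    rw [hD.deriv]
    exact mul_neg_of_neg_of_pos (by linarith) (mul_pos (hu0pos x hxI) (hu1posL x hx))
  -- W is strictly increasing on [x0, 1]
  have hWmono : StrictMonoOn W (Icc x0 (1:ℝ)) := by
    apply strictMonoOn_of_deriv_pos (convex_Icc _ _)
      (hWc.mono (Icc_subset_Icc hx0.1.le le_rfl))
    intro x hx
    rw [interior_Icc] at hx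
    have hxI : x ∈ Ioo (-1:ℝ) 1 := ⟨hx0.1.trans hx.1, hx.2⟩
    have hD : HasDerivAt W ((lam0 - lam1) * (u0 x * u1 x)) x :=
      (hWd x (Ioo_subset_Icc_self hxI)).hasDerivAt (Icc_mem_nhds hxI.1 hxI.2)
    rw [hD.deriv]
    exact mul_pos_of_neg_of_neg (by linarith)
      (mul_neg_of_pos_of_neg (hu0pos x hxI) (hu1negR x hx))
  -- hence W < 0 on the open interval
  have hWneg : ∀ x ∈ Ioo (-1:ℝ) 1, W x < 0 := by
    intro x hx
    rcases le_or_gt x x0 with h | h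
    · have := hWanti ⟨le_rfl, hx0.1.le⟩ ⟨hx.1.le, h⟩ hx.1
      rwa [hWL] at this
    · have := hWmono ⟨h.le, hx.2.le⟩ ⟨hx0.2.le, le_rfl⟩ hx.2
      rwa [hWR] at this
  -- finish
  refine strictAntiOn_of_deriv_neg (convex_Icc _ _) ?_ ?_
  · exact hu1c.div hu0c (fun x hx => ne_of_gt (hu0posI x hx))
  intro x hx
  rw [interior_Icc] at hx
  have hxI : x ∈ Icc (-1:ℝ) 1 := Ioo_subset_Icc_self hx
  have h1 : HasDerivAt u1 (u1' x) x := (hu1d1 x hxI).hasDerivAt (Icc_mem_nhds hx.1 hx.2)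
  have h0 : HasDerivAt u0 (u0' x) x := (hu0d1 x hxI).hasDerivAt (Icc_mem_nhds hx.1 hx.2)
  have hq := h1.div h0 (ne_of_gt (hu0posI x hxI))
  rw [show (fun x => u1 x / u0 x) = u1 / u0 from rfl, hq.deriv]
  exact div_neg_of_neg_of_pos (hWneg x hx) (pow_pos (hu0posI x hxI) 2)
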